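/- Noether's theorem in one dimension: if Ξ = ξ(x)∂_x + φ(x,y)∂_y is a symmetry of the first-order Lagrangian L(x,y,y_x), i.e., the prolonged Lie derivative pr Ξ(L) + L·ξ'(x) = 0 identically (where pr Ξ = ξ∂_x + φ∂_y + (D_xφ − y_x ξ')∂_{y_x}), then for every solution γ of the Euler–Lagrange equation E(L)(j_2γ) = 0, the current ε(x) := (φ(x,γ) − γ'ξ)·(∂_{y_x}L)(j_1γ) + ξ·L(j_1γ) is constant: dε/dx = 0. -/

import Mathlib

/-- Partial derivative in `x` of a function of the jet variables `(x, y, y_x)`. -/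
noncomputable def pX (g : ℝ × ℝ × ℝ → ℝ) (p : ℝ × ℝ × ℝ) : ℝ := fderiv ℝ g p (1, 0, 0)

/-- Partial derivative in `y`. -/
noncomputable def pY (g : ℝ × ℝ × ℝ → ℝ) (p : ℝ × ℝ × ℝ) : ℝ := fderiv ℝ g p (0, 1, 0)

/-- Partial derivative in `y_x`. -/
noncomputable def pYx (g : ℝ × ℝ × ℝ → ℝ) (p : ℝ × ℝ × ℝ) : ℝ := fderiv ℝ g p (0, 0, 1)

/-- The Euler–Lagrange expression `E(L) = ∂_y L − D_x(∂_{y_x} L)` of a first-order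
Lagrangian `L(x, y, y_x)` (with `n = m = 1`), as a function of the 2-jet
variables `(x, y, y_x, y_{xx})`, where `D_x = ∂_x + y_x ∂_y + y_{xx} ∂_{y_x}`. -/
noncomputable def EL (L : ℝ × ℝ × ℝ → ℝ) (x y yx yxx : ℝ) : ℝ :=
  pY L (x, y, yx) -
    (pX (fun p => pYx L p) (x, y, yx) + yx * pY (fun p => pYx L p) (x, y, yx)
      + yxx * pYx (fun p => pYx L p) (x, y, yx))



lemma jet_hasDerivAt (γ : ℝ → ℝ) (hγ : ContDiff ℝ (⊤:ℕ∞) γ) (x : ℝ) :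
    HasDerivAt (fun z => ((z, γ z, deriv γ z) : ℝ×ℝ×ℝ))
      ((1, deriv γ x, deriv (deriv γ) x) : ℝ×ℝ×ℝ) x := by
  have hγ' : ContDiff ℝ (⊤:ℕ∞) (deriv γ) := (contDiff_infty_iff_deriv.mp hγ).2
  exact (hasDerivAt_id x).prodMk
    (((hγ.differentiable (by simp) x).hasDerivAt).prodMk
      ((hγ'.differentiable (by simp) x).hasDerivAt))

lemma chain3 (g : ℝ × ℝ × ℝ → ℝ) (hg : ContDiff ℝ (⊤:ℕ∞) g)
    (γ : ℝ → ℝ) (hγ : ContDiff ℝ (⊤:ℕ∞) γ) (x : ℝ) :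
    HasDerivAt (fun z => g (z, γ z, deriv γ z))
      (pX g (x, γ x, deriv γ x) + deriv γ x * pY g (x, γ x, deriv γ x)
        + deriv (deriv γ) x * pYx g (x, γ x, deriv γ x)) x := by
  have h := ((hg.differentiable (by simp) _).hasFDerivAt).comp_hasDerivAt x
    (jet_hasDerivAt γ hγ x)
  refine h.congr_deriv ?_
  have : ((1, deriv γ x, deriv (deriv γ) x) : ℝ×ℝ×ℝ)
      = (1,0,0) + (deriv γ x) • ((0,1,0) : ℝ×ℝ×ℝ) + (deriv (deriv γ) x) • ((0,0,1) : ℝ×ℝ×ℝ) := by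
    simp [Prod.ext_iff]
  rw [this, map_add, map_add, map_smul, map_smul]
  simp [pX, pY, pYx, smul_eq_mul]

lemma chain2 (φ : ℝ × ℝ → ℝ) (hφ : ContDiff ℝ (⊤:ℕ∞) φ)
    (γ : ℝ → ℝ) (hγ : ContDiff ℝ (⊤:ℕ∞) γ) (x : ℝ) :
    HasDerivAt (fun z => φ (z, γ z))
      (fderiv ℝ φ (x, γ x) (1, 0) + deriv γ x * fderiv ℝ φ (x, γ x) (0, 1)) x := by
  have hc : HasDerivAt (fun z => ((z, γ z) : ℝ×ℝ)) ((1, deriv γ x) : ℝ×ℝ) x :=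
    (hasDerivAt_id x).prodMk ((hγ.differentiable (by simp) x).hasDerivAt)
  have h := ((hφ.differentiable (by simp) _).hasFDerivAt).comp_hasDerivAt x hc
  refine h.congr_deriv ?_
  have : ((1, deriv γ x) : ℝ×ℝ) = (1,0) + (deriv γ x) • ((0,1) : ℝ×ℝ) := by
    simp [Prod.ext_iff]
  rw [this, map_add, map_smul]
  simp [smul_eq_mul]

/-- Noether's theorem in one dimension (`n = m = 1`).  If
`Ξ = ξ(x)∂_x + φ(x,y)∂_y` is a symmetry of the first-order Lagrangian
`L(x, y, y_x)`, i.e. `pr Ξ(L) + L·ξ'(x) = 0` identically, where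
`pr Ξ = ξ∂_x + φ∂_y + (D_x φ − y_x ξ')∂_{y_x}` and
`D_x φ = ∂_x φ + y_x ∂_y φ`, then along every solution `γ` of the
Euler–Lagrange equation `E(L)(j₂γ) = 0` the Noether current
`ε(x) = (φ(x,γ) − γ'ξ)·(∂_{y_x}L)(j₁γ) + ξ·L(j₁γ)` is constant: `dε/dx = 0`. -/
theorem noether_theorem_one_dimension (L : ℝ × ℝ × ℝ → ℝ)
    (hL : ContDiff ℝ (⊤ : ℕ∞) L)
    (ξ : ℝ → ℝ) (hξ : ContDiff ℝ (⊤ : ℕ∞) ξ)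
    (φ : ℝ × ℝ → ℝ) (hφ : ContDiff ℝ (⊤ : ℕ∞) φ)
    (hsym : ∀ x y yx,
      ξ x * pX L (x, y, yx) + φ (x, y) * pY L (x, y, yx)
        + ((fderiv ℝ φ (x, y) (1, 0) + yx * fderiv ℝ φ (x, y) (0, 1))
            - yx * deriv ξ x) * pYx L (x, y, yx)
        + L (x, y, yx) * deriv ξ x = 0)
    (γ : ℝ → ℝ) (hγ : ContDiff ℝ (⊤ : ℕ∞) γ)
    (hsol : ∀ x, EL L x (γ x) (deriv γ x) (deriv (deriv γ) x) = 0) (x : ℝ) :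
    deriv (fun z =>
      (φ (z, γ z) - deriv γ z * ξ z) * pYx L (z, γ z, deriv γ z)
        + ξ z * L (z, γ z, deriv γ z)) x = 0 := by
  have hP : ContDiff ℝ (⊤:ℕ∞) (fun p => pYx L p) := by
    have := (hL.fderiv_right (m := (⊤:ℕ∞)) (by exact_mod_cast le_refl (⊤:ℕ∞))).clm_apply
      (contDiff_const (c := ((0,0,1) : ℝ×ℝ×ℝ)))
    exact this
  have hγ' : ContDiff ℝ (⊤:ℕ∞) (deriv γ) := (contDiff_infty_iff_deriv.mp hγ).2
  have h1 : HasDerivAt (fun z => φ (z, γ z))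
      (fderiv ℝ φ (x, γ x) (1, 0) + deriv γ x * fderiv ℝ φ (x, γ x) (0, 1)) x :=
    chain2 φ hφ γ hγ x
  have h3 : HasDerivAt (deriv γ) (deriv (deriv γ) x) x :=
    (hγ'.differentiable (by simp) x).hasDerivAt
  have h4 : HasDerivAt ξ (deriv ξ x) x := (hξ.differentiable (by simp) x).hasDerivAt
  have h5 := chain3 (fun p => pYx L p) hP γ hγ x
  have h6 := chain3 L hL γ hγ x
  have h := (((h1.sub (h3.mul h4)).mul h5).add (h4.mul h6)).deriv
  simp only [Pi.add_apply, Pi.sub_apply, Pi.mul_apply] at h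
  erw [h]
  have hs := hsym x (γ x) (deriv γ x)
  have he := hsol x
  unfold EL at he
  linear_combination hs - (φ (x, γ x) - deriv γ x * ξ x) * he
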